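/- arXiv:2012.05880 — 7 statements merged into one kernel-verified Lean document; each statement's English description precedes it below -/
import Mathlib

section
/- Let d ≥ 2. Suppose (v,M) ∈ ℝ^d ⊕ so(d,ℝ) satisfies the cross-section conditions: v_j = 0 for 1 ≤ j ≤ d−1, v_d > 0, M_{j,j+1} > 0 for 1 ≤ j ≤ d−1, and M_{j,k} = 0 for all k > j+1. If A ∈ O_d(ℝ) is such that the pair (A v, A M Aᵀ) also satisfies these cross-section conditions, then A is the identity matrix. (Uniqueness part of the main theorem: the cross-section K_{d;≤n} meets each O_d(ℝ)-orbit in at most one point.) -/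
open Matrix

/-- Uniqueness part of the main theorem: if `(v, M)` satisfies the
cross-section conditions and `A ∈ O_d(ℝ)` is such that `(A v, A M Aᵀ)` also satisfies
them, then `A = 1`. (Indices here are 0-based; the paper's 1-based index `j` corresponds
to `j - 1`.) -/
theorem stmt0 {d : ℕ} (hd : 2 ≤ d)
    (v : Fin d → ℝ) (M A : Matrix (Fin d) (Fin d) ℝ)
    (hMskew : Mᵀ = -M)
    (hA : A * Aᵀ = 1)
    (hv1 : ∀ j : Fin d, (j : ℕ) + 1 < d → v j = 0)
    (hv2 : 0 < v ⟨d - 1, by omega⟩)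
    (hM1 : ∀ j k : Fin d, (k : ℕ) = (j : ℕ) + 1 → 0 < M j k)
    (hM2 : ∀ j k : Fin d, (j : ℕ) + 1 < (k : ℕ) → M j k = 0)
    (hv1' : ∀ j : Fin d, (j : ℕ) + 1 < d → A.mulVec v j = 0)
    (hv2' : 0 < A.mulVec v ⟨d - 1, by omega⟩)
    (hM1' : ∀ j k : Fin d, (k : ℕ) = (j : ℕ) + 1 → 0 < (A * M * Aᵀ) j k)
    (hM2' : ∀ j k : Fin d, (j : ℕ) + 1 < (k : ℕ) → (A * M * Aᵀ) j k = 0) :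
    A = 1 := by
  have hAtA : Aᵀ * A = 1 := mul_eq_one_comm.mp hA
  -- orthonormal columns
  have hcol : ∀ i j : Fin d, (∑ l, A l i * A l j) = if i = j then 1 else 0 := by
    intro i j
    have h : (Aᵀ * A) i j = (1 : Matrix (Fin d) (Fin d) ℝ) i j := by rw [hAtA]
    simpa [Matrix.mul_apply, Matrix.one_apply] using h
  -- norm-1 columns with zeros off a single positive entry force that entry to be 1
  have hnorm : ∀ i : Fin d, (∀ j, j ≠ i → A j i = 0) → 0 < A i i → A i i = 1 := by
    intro i h0 hpos
    have h := hcol i i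
    rw [if_pos rfl] at h
    rw [Finset.sum_eq_single i (fun l _ hl => by rw [h0 l hl, zero_mul]) (by simp)] at h
    nlinarith
  set D : Fin d := ⟨d - 1, by omega⟩ with hD
  -- base: column d-1 of A is e_{d-1}
  have hmul : ∀ j : Fin d, A.mulVec v j = A j D * v D := by
    intro j
    rw [Matrix.mulVec, dotProduct]
    refine Finset.sum_eq_single D (fun l _ hl => ?_) (by simp)
    have : (l : ℕ) ≠ d - 1 := fun h => hl (Fin.ext h)
    rw [hv1 l (by omega), mul_zero]
  have hbase0 : ∀ j : Fin d, j ≠ D → A j D = 0 := by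
    intro j hj
    have hjd : (j : ℕ) + 1 < d := by
      have : (j : ℕ) ≠ d - 1 := fun h => hj (Fin.ext h)
      omega
    have h := hv1' j hjd
    rw [hmul j] at h
    exact (mul_eq_zero.mp h).resolve_right (ne_of_gt hv2)
  have hbaseD : A D D = 1 := by
    refine hnorm D hbase0 ?_
    have h := hv2'
    rw [hmul D] at h
    by_contra hc
    push_neg at hc
    nlinarith
  have hbase : ∀ j : Fin d, A j D = if j = D then 1 else 0 := by
    intro j
    by_cases hj : j = D
    · rw [if_pos hj, hj, hbaseD]
    · rw [if_neg hj]; exact hbase0 j hj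
  -- A*M = (A*M*Aᵀ)*A
  have hAM : ∀ j k : Fin d, (∑ l, A j l * M l k) = ∑ l, (A * M * Aᵀ) j l * A l k := by
    intro j k
    have h : A * M = (A * M * Aᵀ) * A := by
      rw [Matrix.mul_assoc (A * M) Aᵀ A, hAtA, Matrix.mul_one]
    have h2 : (A * M) j k = ((A * M * Aᵀ) * A) j k := by conv_lhs => rw [h]
    simpa [Matrix.mul_apply] using h2
  -- main downward induction on columns
  have key : ∀ n : ℕ, ∀ i : Fin d, d ≤ (i : ℕ) + 1 + n →
      ∀ j, A j i = if j = i then 1 else 0 := by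
    intro n
    induction n with
    | zero =>
      intro i hi j
      have : i = D := Fin.ext (by have := i.isLt; simp [hD]; omega)
      subst this
      exact hbase j
    | succ n ih =>
      intro i hi j
      by_cases hcase : d ≤ (i : ℕ) + 1 + n
      · exact ih i hcase j
      -- now (i:ℕ) + 2 + n = d, so i < d - 1
      have hIH : ∀ m : Fin d, (i : ℕ) < (m : ℕ) → ∀ j, A j m = if j = m then 1 else 0 :=
        fun m hm => ih m (by omega)
      have hi1 : (i : ℕ) + 1 < d := by omega
      set i' : Fin d := ⟨(i : ℕ) + 1, hi1⟩ with hi'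
      have hii' : (i' : ℕ) = (i : ℕ) + 1 := rfl
      -- LHS of hAM at (j, i') is A j i * M i i' + (contribution from l = j if j > i)
      have hzero : ∀ j : Fin d, (j : ℕ) ≤ (i : ℕ) → A j i * M i i' = (A * M * Aᵀ) j i' := by
        intro j hji
        have hL : (∑ l, A j l * M l i') = A j i * M i i' := by
          refine Finset.sum_eq_single i (fun l _ hl => ?_) (by simp)
          rcases lt_or_gt_of_ne (fun h : (l : ℕ) = (i : ℕ) => hl (Fin.ext h)) with h | h
          · rw [hM2 l i' (by omega), mul_zero]
          · rw [hIH l h j, if_neg (fun he => by subst he; omega), zero_mul]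
        have hR : (∑ l, (A * M * Aᵀ) j l * A l i') = (A * M * Aᵀ) j i' := by
          have hterm : ∀ l, (A * M * Aᵀ) j l * A l i'
              = if l = i' then (A * M * Aᵀ) j l else 0 := by
            intro l
            rw [hIH i' (by omega) l]
            split <;> simp
          rw [Finset.sum_congr rfl (fun l _ => hterm l), Finset.sum_ite_eq' Finset.univ i']
          simp
        rw [← hL, ← hR]
        exact hAM j i'
      have hup : ∀ j : Fin d, j ≠ i → A j i = 0 := by
        intro j hj
        rcases lt_or_gt_of_ne (fun h : (j : ℕ) = (i : ℕ) => hj (Fin.ext h)) with h | h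
        · -- j < i : use the matrix equation
          have h0 := hzero j (le_of_lt h)
          rw [hM2' j i' (by omega)] at h0
          exact (mul_eq_zero.mp h0).resolve_right (ne_of_gt (hM1 i i' rfl))
        · -- j > i : use orthogonality of columns i and j
          have h0 := hcol i j
          rw [if_neg hj.symm] at h0
          rw [Finset.sum_eq_single j (fun l _ hl => by
            rw [hIH j h l, if_neg hl, mul_zero]) (by simp)] at h0
          rw [hIH j h j, if_pos rfl, mul_one] at h0
          exact h0
      by_cases hj : j = i
      · subst hj
        rw [if_pos rfl]
        refine hnorm j hup ?_
        have h0 := hzero j (le_refl _)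
        have hpos := hM1' j i' rfl
        rw [← h0] at hpos
        by_contra hc
        push_neg at hc
        nlinarith [hM1 j i' rfl]
      · rw [if_neg hj]; exact hup j hj
  ext j i
  rw [key d i (by omega) j, Matrix.one_apply]
end

section
/- Let d ≥ 2, α > 0 and β_1,…,β_{d−1} > 0. Let v = α·e_d ∈ ℝ^d and let M ∈ so(d,ℝ) be the tridiagonal skew-symmetric matrix with M_{k,k+1} = β_k for 1 ≤ k ≤ d−1 and M_{j,k} = 0 for k > j+1. Then: (i) if H ∈ so(d,ℝ) satisfies (H v)_j = 0 for all 1 ≤ j ≤ d−1 and ([H,M])_{j,k} = 0 for all k > j+1, where [H,M] = HM − MH, then H = 0; and (ii) every pair (w,N) ∈ ℝ^d ⊕ so(d,ℝ) can be written uniquely as (w,N) = (H v, [H,M]) + (w', N') with H ∈ so(d,ℝ), w'_j = 0 for 1 ≤ j ≤ d−1, and N' ∈ so(d,ℝ) with N'_{j,k} = 0 for k > j+1. (Transversality of the orbit and the cross-section at points of the cross-section.) -/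
open Matrix


/-- Pack a vector (superdiagonal slot) and the above-superdiagonal entries of a
matrix into a skew-symmetric matrix. -/
def Gmat {d : ℕ} (w : Fin d → ℝ) (N : Matrix (Fin d) (Fin d) ℝ) :
    Matrix (Fin d) (Fin d) ℝ :=
  fun j k =>
    if (j : ℕ) < (k : ℕ) then
      (if (k : ℕ) = (j : ℕ) + 1 then w j else N j k)
    else if (k : ℕ) < (j : ℕ) then
      -(if (j : ℕ) = (k : ℕ) + 1 then w k else N k j)
    else 0

lemma Gmat_skew {d : ℕ} (w : Fin d → ℝ) (N : Matrix (Fin d) (Fin d) ℝ) :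
    (Gmat w N)ᵀ = -(Gmat w N) := by
  ext j k
  simp only [Matrix.transpose_apply, Matrix.neg_apply, Gmat]
  split_ifs with h1 h2 h3 h4 h5 h6 h7 h8 h9 h10 h11 h12 h13 h14 h15
  all_goals (try (exfalso; omega))
  all_goals ring

lemma Gmat_add {d : ℕ} (w1 w2 : Fin d → ℝ) (N1 N2 : Matrix (Fin d) (Fin d) ℝ) :
    Gmat (w1 + w2) (N1 + N2) = Gmat w1 N1 + Gmat w2 N2 := by
  ext j k
  simp only [Gmat, Matrix.add_apply, Pi.add_apply]
  split_ifs <;> ring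

lemma Gmat_smul {d : ℕ} (c : ℝ) (w : Fin d → ℝ) (N : Matrix (Fin d) (Fin d) ℝ) :
    Gmat (c • w) (c • N) = c • Gmat w N := by
  ext j k
  simp only [Gmat, Matrix.smul_apply, Pi.smul_apply, smul_eq_mul]
  split_ifs <;> ring

lemma Gmat_sup {d : ℕ} (w : Fin d → ℝ) (N : Matrix (Fin d) (Fin d) ℝ)
    (j k : Fin d) (h : (k : ℕ) = (j : ℕ) + 1) : Gmat w N j k = w j := by
  simp only [Gmat]
  rw [if_pos (by omega), if_pos h]

lemma Gmat_above {d : ℕ} (w : Fin d → ℝ) (N : Matrix (Fin d) (Fin d) ℝ)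
    (j k : Fin d) (h : (j : ℕ) + 1 < (k : ℕ)) : Gmat w N j k = N j k := by
  simp only [Gmat]
  rw [if_pos (by omega), if_neg (by omega)]

lemma key_inj {d : ℕ} (hd : 2 ≤ d) (α : ℝ) (hα : 0 < α)
    (β : Fin d → ℝ) (hβ : ∀ j : Fin d, (j : ℕ) + 1 < d → 0 < β j)
    (v : Fin d → ℝ) (hv : v = fun j : Fin d => if (j : ℕ) = d - 1 then α else 0)
    (M : Matrix (Fin d) (Fin d) ℝ)
    (hMsup : ∀ j k : Fin d, (k : ℕ) = (j : ℕ) + 1 → M j k = β j)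
    (hMzero : ∀ j k : Fin d, (j : ℕ) + 1 < (k : ℕ) → M j k = 0)
    (H : Matrix (Fin d) (Fin d) ℝ) (hH : Hᵀ = -H)
    (h1 : ∀ j : Fin d, (j : ℕ) + 1 < d → H.mulVec v j = 0)
    (h2 : ∀ j k : Fin d, (j : ℕ) + 1 < (k : ℕ) → (H * M - M * H) j k = 0) :
    H = 0 := by
  have hskew : ∀ j k : Fin d, H k j = -H j k := by
    intro j k
    have := congrFun (congrFun hH j) k
    simpa [Matrix.transpose_apply] using this
  have hdiag : ∀ j : Fin d, H j j = 0 := by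
    intro j; have := hskew j j; linarith
  have col : ∀ t : ℕ, ∀ j k : Fin d, d - 1 - t ≤ (k : ℕ) → H j k = 0 := by
    intro t
    induction t with
    | zero =>
      intro j k hk
      have hkd : (k : ℕ) = d - 1 := by have := k.isLt; omega
      by_cases hj : (j : ℕ) + 1 < d
      · have h0 := h1 j hj
        have hkmem : k ∈ Finset.univ := Finset.mem_univ k
        have hvv : ∀ l : Fin d, v l = if l = k then α else 0 := by
          intro l; rw [hv]
          simp only [Fin.ext_iff, hkd]
        rw [Matrix.mulVec, dotProduct] at h0
        simp only [hvv, mul_ite, mul_zero, Finset.sum_ite_eq', hkmem, if_true] at h0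
        rcases mul_eq_zero.mp h0 with h | h
        · exact h
        · exact absurd h (ne_of_gt hα)
      · have hjd : (j : ℕ) = d - 1 := by have := j.isLt; omega
        have : j = k := Fin.ext (by omega)
        rw [this]; exact hdiag k
    | succ t ih =>
      intro j k hk
      by_cases hcase : d - 1 - t ≤ (k : ℕ)
      · exact ih j k hcase
      · have hm1 : (k : ℕ) + 1 = d - 1 - t := by omega
        have hmlt : d - 1 - t < d := by omega
        set m' : Fin d := ⟨d - 1 - t, hmlt⟩ with hm'
        rcases lt_trichotomy (j : ℕ) (k : ℕ) with hj | hj | hj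
        · have h0 := h2 j m' (by simp [hm']; omega)
          rw [Matrix.sub_apply, Matrix.mul_apply, Matrix.mul_apply] at h0
          have hsum2 : (∑ l, M j l * H l m') = 0 := by
            apply Finset.sum_eq_zero
            intro l _
            have : H l m' = 0 := ih l m' (by simp [hm'])
            rw [this, mul_zero]
          rw [hsum2, sub_zero] at h0
          have hsum1 : (∑ l, H j l * M l m') = H j k * M k m' := by
            apply Finset.sum_eq_single k
            · intro l _ hl
              by_cases hlm : d - 1 - t ≤ (l : ℕ)
              · rw [ih j l hlm, zero_mul]
              · have hlk : (l : ℕ) ≠ (k : ℕ) := fun h => hl (Fin.ext h)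
                have : (l : ℕ) + 1 < (m' : ℕ) := by simp [hm']; omega
                rw [hMzero l m' this, mul_zero]
            · intro h; exact absurd (Finset.mem_univ k) h
          rw [hsum1] at h0
          have hMk : M k m' = β k := hMsup k m' (by simp [hm']; omega)
          rw [hMk] at h0
          have hβk : 0 < β k := hβ k (by omega)
          rcases mul_eq_zero.mp h0 with h | h
          · exact h
          · exact absurd h (ne_of_gt hβk)
        · have : j = k := Fin.ext hj
          rw [this]; exact hdiag k
        · have h0 : H k j = 0 := ih k j (by omega)
          rw [hskew k j, h0, neg_zero]
  ext j k
  simp only [Matrix.zero_apply]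
  exact col (d - 1) j k (by omega)


/-- Transversality of the orbit and the cross-section at a point
`(v, M)` of the cross-section, where `v = α • e_d` and `M` is the tridiagonal
skew-symmetric matrix with superdiagonal entries `β`.
(i) The only skew-symmetric `H` with `(H v, [H, M])` tangent to the cross-section is `0`;
(ii) every `(w, N) ∈ ℝ^d ⊕ so(d, ℝ)` decomposes uniquely as `(H v, [H, M]) + (w', N')`
with `w', N'` tangent to the cross-section. (0-based indices.) -/
theorem stmt1 {d : ℕ} (hd : 2 ≤ d) (α : ℝ) (hα : 0 < α)
    (β : Fin d → ℝ) (hβ : ∀ j : Fin d, (j : ℕ) + 1 < d → 0 < β j)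
    (v : Fin d → ℝ) (hv : v = fun j : Fin d => if (j : ℕ) = d - 1 then α else 0)
    (M : Matrix (Fin d) (Fin d) ℝ) (hMskew : Mᵀ = -M)
    (hMsup : ∀ j k : Fin d, (k : ℕ) = (j : ℕ) + 1 → M j k = β j)
    (hMzero : ∀ j k : Fin d, (j : ℕ) + 1 < (k : ℕ) → M j k = 0) :
    (∀ H : Matrix (Fin d) (Fin d) ℝ, Hᵀ = -H →
      (∀ j : Fin d, (j : ℕ) + 1 < d → H.mulVec v j = 0) →
      (∀ j k : Fin d, (j : ℕ) + 1 < (k : ℕ) → (H * M - M * H) j k = 0) →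
      H = 0) ∧
    (∀ (w : Fin d → ℝ) (N : Matrix (Fin d) (Fin d) ℝ), Nᵀ = -N →
      ∃! HwN : Matrix (Fin d) (Fin d) ℝ × (Fin d → ℝ) × Matrix (Fin d) (Fin d) ℝ,
        HwN.1ᵀ = -HwN.1 ∧ HwN.2.2ᵀ = -HwN.2.2 ∧
        w = HwN.1.mulVec v + HwN.2.1 ∧
        N = (HwN.1 * M - M * HwN.1) + HwN.2.2 ∧
        (∀ j : Fin d, (j : ℕ) + 1 < d → HwN.2.1 j = 0) ∧
        (∀ j k : Fin d, (j : ℕ) + 1 < (k : ℕ) → HwN.2.2 j k = 0)) := by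
  have key := key_inj hd α hα β hβ v hv M hMsup hMzero
  constructor
  · intro H hH h1 h2; exact key H hH h1 h2
  intro w N hN
  -- the submodule of skew-symmetric matrices
  set S : Submodule ℝ (Matrix (Fin d) (Fin d) ℝ) :=
    { carrier := {H | Hᵀ = -H}
      add_mem' := by
        intro a b ha hb
        simp only [Set.mem_setOf_eq] at *
        rw [Matrix.transpose_add, ha, hb, neg_add]
      zero_mem' := by simp
      smul_mem' := by
        intro c a ha
        simp only [Set.mem_setOf_eq] at *
        rw [Matrix.transpose_smul, ha, smul_neg] } with hS
  have memS : ∀ A : Matrix (Fin d) (Fin d) ℝ, A ∈ S ↔ Aᵀ = -A := fun A => Iff.rfl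
  -- the full linear map
  set L' : Matrix (Fin d) (Fin d) ℝ →ₗ[ℝ] Matrix (Fin d) (Fin d) ℝ :=
    { toFun := fun H => Gmat (H.mulVec v) (H * M - M * H)
      map_add' := by
        intro a b
        show Gmat ((a + b).mulVec v) ((a + b) * M - M * (a + b))
          = Gmat (a.mulVec v) (a * M - M * a) + Gmat (b.mulVec v) (b * M - M * b)
        have hc : (a + b) * M - M * (a + b) = (a * M - M * a) + (b * M - M * b) := by
          rw [add_mul, mul_add]; abel
        rw [Matrix.add_mulVec, hc, Gmat_add]
      map_smul' := by
        intro c a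
        show Gmat ((c • a).mulVec v) ((c • a) * M - M * (c • a))
          = c • Gmat (a.mulVec v) (a * M - M * a)
        have hc : (c • a) * M - M * (c • a) = c • (a * M - M * a) := by
          rw [Matrix.smul_mul, Matrix.mul_smul, smul_sub]
        rw [Matrix.smul_mulVec, hc, Gmat_smul] } with hL'
  have hL'apply : ∀ H, L' H = Gmat (H.mulVec v) (H * M - M * H) := fun H => rfl
  have hmapsto : ∀ x ∈ S, L' x ∈ S := by
    intro x _
    rw [memS, hL'apply]
    exact Gmat_skew _ _
  set L : S →ₗ[ℝ] S := L'.restrict hmapsto with hL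
  have hinj : Function.Injective L := by
    rw [injective_iff_map_eq_zero]
    intro x hx
    have hx0 : Gmat (x.1.mulVec v) (x.1 * M - M * x.1) = 0 := by
      have := congrArg Subtype.val hx
      exact this
    have hxskew : x.1ᵀ = -x.1 := x.2
    have hx1 : x.1 = 0 := by
      apply key x.1 hxskew
      · intro j hj
        have := congrFun (congrFun hx0 j) ⟨(j : ℕ) + 1, hj⟩
        rwa [Gmat_sup _ _ j ⟨(j : ℕ) + 1, hj⟩ rfl, Matrix.zero_apply] at this
      · intro j k hjk
        have := congrFun (congrFun hx0 j) k
        rwa [Gmat_above _ _ j k hjk, Matrix.zero_apply] at this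
    exact Subtype.ext hx1
  have hsurj : Function.Surjective L := LinearMap.injective_iff_surjective.mp hinj
  obtain ⟨Hs, hHs⟩ := hsurj ⟨Gmat w N, Gmat_skew w N⟩
  set H : Matrix (Fin d) (Fin d) ℝ := Hs.1 with hHdef
  have hHskew : Hᵀ = -H := Hs.2
  have hFG : Gmat (H.mulVec v) (H * M - M * H) = Gmat w N := congrArg Subtype.val hHs
  have hsup : ∀ j : Fin d, (hj : (j : ℕ) + 1 < d) → H.mulVec v j = w j := by
    intro j hj
    have := congrFun (congrFun hFG j) ⟨(j : ℕ) + 1, hj⟩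
    rwa [Gmat_sup _ _ j ⟨(j : ℕ) + 1, hj⟩ rfl, Gmat_sup _ _ j ⟨(j : ℕ) + 1, hj⟩ rfl] at this
  have habove : ∀ j k : Fin d, (j : ℕ) + 1 < (k : ℕ) → (H * M - M * H) j k = N j k := by
    intro j k hjk
    have := congrFun (congrFun hFG j) k
    rwa [Gmat_above _ _ j k hjk, Gmat_above _ _ j k hjk] at this
  have hcommskew : (H * M - M * H)ᵀ = -(H * M - M * H) := by
    rw [Matrix.transpose_sub, Matrix.transpose_mul, Matrix.transpose_mul, hMskew, hHskew]
    simp only [Matrix.neg_mul, Matrix.mul_neg, neg_neg]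
    abel
  refine ⟨(H, w - H.mulVec v, N - (H * M - M * H)), ⟨hHskew, ?_,
    by funext j; simp only [Pi.add_apply, Pi.sub_apply]; ring,
    by ext j k; simp only [Matrix.add_apply, Matrix.sub_apply]; ring, ?_, ?_⟩, ?_⟩
  · rw [Matrix.transpose_sub, hN, hcommskew]; ext i j; simp only [Matrix.sub_apply, Matrix.neg_apply]; ring
  · intro j hj
    simp only [Pi.sub_apply, hsup j hj, sub_self]
  · intro j k hjk
    simp only [Matrix.sub_apply, habove j k hjk, sub_self]
  · rintro ⟨H2, w2, N2⟩ ⟨hH2skew, hN2skew, hw2, hN2, hw2z, hN2z⟩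
    dsimp only at hH2skew hN2skew hw2 hN2 hw2z hN2z
    have hKskew : (H2 - H)ᵀ = -(H2 - H) := by
      rw [Matrix.transpose_sub, hH2skew, hHskew]; abel
    have hK : H2 - H = 0 := by
      apply key (H2 - H) hKskew
      · intro j hj
        rw [Matrix.sub_mulVec]
        have e2 : H2.mulVec v j = w j := by
          have := congrFun hw2 j
          simp only [Pi.add_apply] at this
          rw [this, hw2z j hj, add_zero]
        simp only [Pi.sub_apply, e2, hsup j hj, sub_self]
      · intro j k hjk
        have hc : (H2 - H) * M - M * (H2 - H)
            = (H2 * M - M * H2) - (H * M - M * H) := by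
          rw [sub_mul, mul_sub]; abel
        rw [hc]
        have e2 : (H2 * M - M * H2) j k = N j k := by
          have := congrFun (congrFun hN2 j) k
          simp only [Matrix.add_apply] at this
          rw [this, hN2z j k hjk, add_zero]
        simp only [Matrix.sub_apply, e2, habove j k hjk, sub_self]
    have hH2 : H2 = H := sub_eq_zero.mp hK
    have hw2' : w2 = w - H.mulVec v := by
      rw [hw2, hH2]
      funext j
      simp only [Pi.sub_apply, Pi.add_apply]
      ring
    have hN2' : N2 = N - (H * M - M * H) := by
      rw [hN2, hH2]
      ext j k
      simp only [Matrix.sub_apply, Matrix.add_apply]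
      ring
    simp only [Prod.mk.injEq]
    exact ⟨hH2, hw2', hN2'⟩
end

section
/- Let (v,M), (v',M') ∈ ℝ³ ⊕ so(3,ℝ). Write c₁,c₂,c₃ for the entries of v and c₁₂ = M_{12}, c₁₃ = M_{13}, c₂₃ = M_{23}, and define the polynomials p₁ = c₁² + c₂² + c₃², p₂ = c₁²(c₁₂² + c₁₃²) + 2c₁c₂₃(c₁₃c₂ − c₁₂c₃) + c₂²(c₁₂² + c₂₃²) + 2c₁₂c₁₃c₂c₃ + c₃²(c₁₃² + c₂₃²), and p₃ = c₁c₂₃ − c₂c₁₃ + c₃c₁₂ (and similarly p₁', p₂', p₃' for (v',M')). Assume p₂(v,M) ≠ 0, p₃(v,M) ≠ 0, p₂(v',M') ≠ 0 and p₃(v',M') ≠ 0. Then there exists A ∈ O_3(ℝ) with A v = v' and A M Aᵀ = M' if and only if p₁ = p₁', p₂ = p₂', and p₃² = (p₃')². (The polynomial invariants p₁, p₂, p₃² characterize the equivalence class of a point of ℝ³ ⊕ so(3,ℝ) under O_3(ℝ) on this open set.) -/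
open Matrix

noncomputable section

/-- `p₁ = c₁² + c₂² + c₃²` for `v = (c₁, c₂, c₃)`. -/
def p1 (v : Fin 3 → ℝ) : ℝ := v 0 ^ 2 + v 1 ^ 2 + v 2 ^ 2

/-- `p₂` in the coordinates `c₁ = v 0, c₂ = v 1, c₃ = v 2, c₁₂ = M 0 1, c₁₃ = M 0 2,
c₂₃ = M 1 2`. -/
def p2 (v : Fin 3 → ℝ) (M : Matrix (Fin 3) (Fin 3) ℝ) : ℝ :=
  v 0 ^ 2 * (M 0 1 ^ 2 + M 0 2 ^ 2) + 2 * v 0 * M 1 2 * (M 0 2 * v 1 - M 0 1 * v 2)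
    + v 1 ^ 2 * (M 0 1 ^ 2 + M 1 2 ^ 2) + 2 * M 0 1 * M 0 2 * v 1 * v 2
    + v 2 ^ 2 * (M 0 2 ^ 2 + M 1 2 ^ 2)

/-- `p₃ = c₁c₂₃ − c₂c₁₃ + c₃c₁₂`. -/
def p3 (v : Fin 3 → ℝ) (M : Matrix (Fin 3) (Fin 3) ℝ) : ℝ :=
  v 0 * M 1 2 - v 1 * M 0 2 + v 2 * M 0 1

def qM (M : Matrix (Fin 3) (Fin 3) ℝ) : ℝ := M 0 1 ^ 2 + M 0 2 ^ 2 + M 1 2 ^ 2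

lemma skew_entries {M : Matrix (Fin 3) (Fin 3) ℝ} (h : Mᵀ = -M) :
    M 0 0 = 0 ∧ M 1 1 = 0 ∧ M 2 2 = 0 ∧ M 1 0 = -M 0 1 ∧ M 2 0 = -M 0 2 ∧ M 2 1 = -M 1 2 := by
  have h' : ∀ i j, M j i = -M i j := fun i j => by
    have := congrFun (congrFun h i) j
    simpa [Matrix.transpose_apply] using this
  refine ⟨by have := h' 0 0; linarith, by have := h' 1 1; linarith,
    by have := h' 2 2; linarith, h' 0 1, h' 0 2, h' 1 2⟩

lemma p2_eq_norm {v : Fin 3 → ℝ} {M : Matrix (Fin 3) (Fin 3) ℝ} (h : Mᵀ = -M) :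
    p2 v M = (M.mulVec v 0) ^ 2 + (M.mulVec v 1) ^ 2 + (M.mulVec v 2) ^ 2 := by
  obtain ⟨h00, h11, h22, h10, h20, h21⟩ := skew_entries h
  simp only [Matrix.mulVec, dotProduct, Fin.sum_univ_three, p2, h00, h11, h22, h10, h20, h21]
  ring

lemma p3_sq (v : Fin 3 → ℝ) (M : Matrix (Fin 3) (Fin 3) ℝ) :
    (p3 v M) ^ 2 = p1 v * qM M - p2 v M := by
  simp only [p1, p2, p3, qM]; ring

lemma normInv3 {A : Matrix (Fin 3) (Fin 3) ℝ} (h : Aᵀ * A = 1) (y : Fin 3 → ℝ) :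
    (A.mulVec y 0) ^ 2 + (A.mulVec y 1) ^ 2 + (A.mulVec y 2) ^ 2
      = y 0 ^ 2 + y 1 ^ 2 + y 2 ^ 2 := by
  have e : ∀ i j, A 0 i * A 0 j + A 1 i * A 1 j + A 2 i * A 2 j = (1 : Matrix (Fin 3) (Fin 3) ℝ) i j := by
    intro i j
    have := congrFun (congrFun h i) j
    simpa [Matrix.mul_apply, Fin.sum_univ_three, Matrix.transpose_apply] using this
  have e00 := e 0 0; have e11 := e 1 1; have e22 := e 2 2
  have e01 := e 0 1; have e02 := e 0 2; have e12 := e 1 2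
  simp [Matrix.one_apply, Fin.ext_iff] at e00 e11 e22 e01 e02 e12
  simp only [Matrix.mulVec, dotProduct, Fin.sum_univ_three]
  linear_combination (y 0)^2 * e00 + (y 1)^2 * e11 + (y 2)^2 * e22
    + 2 * y 0 * y 1 * e01 + 2 * y 0 * y 2 * e02 + 2 * y 1 * y 2 * e12

lemma qM_eq_trace {M : Matrix (Fin 3) (Fin 3) ℝ} (h : Mᵀ = -M) :
    2 * qM M = Matrix.trace (Mᵀ * M) := by
  obtain ⟨h00, h11, h22, h10, h20, h21⟩ := skew_entries h
  simp only [Matrix.trace, Matrix.diag, Fin.sum_univ_three, Matrix.mul_apply,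
    Matrix.transpose_apply, qM, h00, h11, h22, h10, h20, h21]
  ring

lemma qM_inv {A M : Matrix (Fin 3) (Fin 3) ℝ} (hA : A * Aᵀ = 1) (hM : Mᵀ = -M) :
    qM (A * M * Aᵀ) = qM M := by
  have hA' : Aᵀ * A = 1 := mul_eq_one_comm.mp hA
  have hsk : (A * M * Aᵀ)ᵀ = -(A * M * Aᵀ) := by
    simp [Matrix.transpose_mul, Matrix.mul_assoc, hM, Matrix.mul_neg, Matrix.neg_mul]
  have t1 := qM_eq_trace hM
  have t2 := qM_eq_trace hsk
  have : Matrix.trace ((A * M * Aᵀ)ᵀ * (A * M * Aᵀ)) = Matrix.trace (Mᵀ * M) := by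
    have key : (A * M * Aᵀ)ᵀ * (A * M * Aᵀ) = A * (Mᵀ * M) * Aᵀ := by
      have : A * Mᵀ * (Aᵀ * A) * M * Aᵀ = A * (Mᵀ * M) * Aᵀ := by
        rw [hA']; simp [Matrix.mul_assoc]
      simp only [Matrix.transpose_mul, Matrix.transpose_transpose]
      rw [← this]; simp [Matrix.mul_assoc]
    rw [key, Matrix.trace_mul_cycle, ← Matrix.mul_assoc, hA', Matrix.one_mul]
  linarith [t1, t2, this]

section
variable (v : Fin 3 → ℝ) (M : Matrix (Fin 3) (Fin 3) ℝ)

set_option maxHeartbeats 2000000 in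
lemma canon (hsk : Mᵀ = -M) (hp2 : p2 v M ≠ 0) :
    ∃ A : Matrix (Fin 3) (Fin 3) ℝ, A * Aᵀ = 1 ∧
      A.mulVec v = ![Real.sqrt (p1 v), 0, 0] ∧
      A * M * Aᵀ = !![0, 0, Real.sqrt (p2 v M) / Real.sqrt (p1 v);
                      0, 0, p3 v M / Real.sqrt (p1 v);
                      -(Real.sqrt (p2 v M) / Real.sqrt (p1 v)), -(p3 v M / Real.sqrt (p1 v)), 0] := by
  obtain ⟨h00, h11, h22, h10, h20, h21⟩ := skew_entries hsk
  have hp2pos : 0 < p2 v M := by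
    rcases lt_or_ge 0 (p2 v M) with h | h
    · exact h
    · exact absurd (le_antisymm h (by
        have : p2 v M = (M 0 1 * v 1 + M 0 2 * v 2)^2 + (M 0 1 * v 0 - M 1 2 * v 2)^2
            + (M 0 2 * v 0 + M 1 2 * v 1)^2 := by simp only [p2]; ring
        rw [this]; positivity)) hp2
  have hp1pos : 0 < p1 v := by
    rcases lt_or_ge 0 (p1 v) with h | h
    · exact h
    · exfalso
      simp only [p1] at h
      have h0 : v 0 = 0 := by nlinarith [sq_nonneg (v 0), sq_nonneg (v 1), sq_nonneg (v 2)]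
      have h1 : v 1 = 0 := by nlinarith [sq_nonneg (v 0), sq_nonneg (v 1), sq_nonneg (v 2)]
      have h2 : v 2 = 0 := by nlinarith [sq_nonneg (v 0), sq_nonneg (v 1), sq_nonneg (v 2)]
      exact hp2 (by simp [p2, h0, h1, h2])
  set s := Real.sqrt (p1 v) with hs_def
  set t := Real.sqrt (p2 v M) with ht_def
  have hs2 : s ^ 2 = v 0 ^ 2 + v 1 ^ 2 + v 2 ^ 2 := by
    rw [hs_def, Real.sq_sqrt hp1pos.le]; rfl
  have ht2 : t ^ 2 = p2 v M := Real.sq_sqrt hp2pos.le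
  simp only [p2] at ht2
  have hs0 : s ≠ 0 := by positivity
  have ht0 : t ≠ 0 := by positivity
  set u0 : ℝ := -(M 0 1 * v 1 + M 0 2 * v 2) with hu0
  set u1 : ℝ := M 0 1 * v 0 - M 1 2 * v 2 with hu1
  set u2 : ℝ := M 0 2 * v 0 + M 1 2 * v 1 with hu2
  set w0 : ℝ := u1 * v 2 - u2 * v 1 with hw0
  set w1 : ℝ := u2 * v 0 - u0 * v 2 with hw1
  set w2 : ℝ := u0 * v 1 - u1 * v 0 with hw2
  refine ⟨!![v 0 / s, v 1 / s, v 2 / s; w0 / (s * t), w1 / (s * t), w2 / (s * t);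
      u0 / t, u1 / t, u2 / t], ?_, ?_, ?_⟩
  · ext i j
    fin_cases i <;> fin_cases j <;> simp [Matrix.mul_apply, Fin.sum_univ_three, Matrix.one_apply, Matrix.transpose, Matrix.vecHead, Matrix.vecTail, Matrix.vecMul, dotProduct]
    · (try simp only [hw0, hw1, hw2, hu0, hu1, hu2])
      field_simp; linear_combination -hs2
    · (try simp only [hw0, hw1, hw2, hu0, hu1, hu2])
      field_simp; ring
    · (try simp only [hw0, hw1, hw2, hu0, hu1, hu2])
      field_simp; ring
    · (try simp only [hw0, hw1, hw2, hu0, hu1, hu2])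
      field_simp; ring
    · (try simp only [hw0, hw1, hw2, hu0, hu1, hu2])
      field_simp; linear_combination (-(v 0 ^ 2 * (M 0 1 ^ 2 + M 0 2 ^ 2) + 2 * v 0 * M 1 2 * (M 0 2 * v 1 - M 0 1 * v 2) + v 1 ^ 2 * (M 0 1 ^ 2 + M 1 2 ^ 2) + 2 * M 0 1 * M 0 2 * v 1 * v 2 + v 2 ^ 2 * (M 0 2 ^ 2 + M 1 2 ^ 2))) * hs2 + (-(s^2)) * ht2
    · (try simp only [hw0, hw1, hw2, hu0, hu1, hu2])
      field_simp; ring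
    · (try simp only [hw0, hw1, hw2, hu0, hu1, hu2])
      field_simp; ring
    · (try simp only [hw0, hw1, hw2, hu0, hu1, hu2])
      field_simp; ring
    · (try simp only [hw0, hw1, hw2, hu0, hu1, hu2])
      field_simp; linear_combination -ht2
  · funext i
    fin_cases i <;> simp [Matrix.mulVec, dotProduct, Fin.sum_univ_three]
    · (try simp only [hw0, hw1, hw2, hu0, hu1, hu2])
      field_simp; linear_combination -hs2
    · (try simp only [hw0, hw1, hw2, hu0, hu1, hu2])
      field_simp; ring
    · (try simp only [hw0, hw1, hw2, hu0, hu1, hu2])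
      field_simp; ring
  · ext i j
    fin_cases i <;> fin_cases j <;> simp [Matrix.mul_apply, Fin.sum_univ_three, p3, h00, h11, h22, h10, h20, h21, Matrix.transpose, Matrix.vecHead, Matrix.vecTail, Matrix.vecMul, dotProduct]
    · (try simp only [hw0, hw1, hw2, hu0, hu1, hu2])
      field_simp; ring
    · (try simp only [hw0, hw1, hw2, hu0, hu1, hu2])
      field_simp; ring
    · (try simp only [hw0, hw1, hw2, hu0, hu1, hu2])
      field_simp
      linear_combination (-1) * ht2
    · (try simp only [hw0, hw1, hw2, hu0, hu1, hu2])
      field_simp; ring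
    · (try simp only [hw0, hw1, hw2, hu0, hu1, hu2])
      field_simp; ring
    · (try simp only [hw0, hw1, hw2, hu0, hu1, hu2])
      field_simp
      linear_combination ((-1)*v 2*M 0 1 + v 1*M 0 2 + (-1)*v 0*M 1 2) * ht2
    · (try simp only [hw0, hw1, hw2, hu0, hu1, hu2])
      field_simp
      linear_combination ht2
    · (try simp only [hw0, hw1, hw2, hu0, hu1, hu2])
      field_simp
      linear_combination (v 2*M 0 1 + (-1)*v 1*M 0 2 + v 0*M 1 2) * ht2
    · (try simp only [hw0, hw1, hw2, hu0, hu1, hu2])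
      field_simp; ring

lemma trans_canon {A A' M M' : Matrix (Fin 3) (Fin 3) ℝ} {v v' : Fin 3 → ℝ}
    (hA : A * Aᵀ = 1) (hA' : A' * A'ᵀ = 1)
    (hv : A.mulVec v = A'.mulVec v') (hM : A * M * Aᵀ = A' * M' * A'ᵀ) :
    ∃ B : Matrix (Fin 3) (Fin 3) ℝ, B * Bᵀ = 1 ∧ B.mulVec v = v' ∧ B * M * Bᵀ = M' := by
  have hA'2 : A'ᵀ * A' = 1 := mul_eq_one_comm.mp hA'
  refine ⟨A'ᵀ * A, ?_, ?_, ?_⟩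
  · have : A'ᵀ * (A * Aᵀ) * A' = 1 := by rw [hA, Matrix.mul_one, hA'2]
    rw [Matrix.transpose_mul, Matrix.transpose_transpose, ← this]
    simp [Matrix.mul_assoc]
  · rw [← Matrix.mulVec_mulVec, hv, Matrix.mulVec_mulVec, hA'2, Matrix.one_mulVec]
  · have e1 : A'ᵀ * A * M * (A'ᵀ * A)ᵀ = A'ᵀ * (A * M * Aᵀ) * A' := by
      simp [Matrix.transpose_mul, Matrix.mul_assoc]
    rw [e1, hM]
    calc A'ᵀ * (A' * M' * A'ᵀ) * A' = (A'ᵀ * A') * M' * (A'ᵀ * A') := by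
          simp [Matrix.mul_assoc]
      _ = M' := by rw [hA'2, Matrix.one_mul, Matrix.mul_one]

end
set_option maxHeartbeats 1000000 in
/-- On the open set `{p₂ ≠ 0, p₃ ≠ 0}`, the polynomial invariants
`p₁, p₂, p₃²` characterize the `O_3(ℝ)`-equivalence class of a point of `ℝ³ ⊕ so(3,ℝ)`. -/
theorem stmt3 (v v' : Fin 3 → ℝ) (M M' : Matrix (Fin 3) (Fin 3) ℝ)
    (hMskew : Mᵀ = -M) (hM'skew : M'ᵀ = -M')
    (hp2 : p2 v M ≠ 0) (hp3 : p3 v M ≠ 0)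
    (hp2' : p2 v' M' ≠ 0) (hp3' : p3 v' M' ≠ 0) :
    (∃ A : Matrix (Fin 3) (Fin 3) ℝ,
        A * Aᵀ = 1 ∧ A.mulVec v = v' ∧ A * M * Aᵀ = M') ↔
      (p1 v = p1 v' ∧ p2 v M = p2 v' M' ∧ (p3 v M) ^ 2 = (p3 v' M') ^ 2) := by
  constructor
  · rintro ⟨A, hA, hv, hM⟩
    have hA' : Aᵀ * A = 1 := mul_eq_one_comm.mp hA
    have h1 : p1 v = p1 v' := by
      rw [← hv]
      simp only [p1]
      exact (normInv3 hA' v).symm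
    have hMv : M'.mulVec v' = A.mulVec (M.mulVec v) := by
      have hAtA : Aᵀ.mulVec (A.mulVec v) = v := by
        rw [Matrix.mulVec_mulVec, hA', Matrix.one_mulVec]
      calc M'.mulVec v' = (A * M * Aᵀ).mulVec (A.mulVec v) := by rw [hv, hM]
        _ = A.mulVec (M.mulVec (Aᵀ.mulVec (A.mulVec v))) := by
            simp [Matrix.mulVec_mulVec, Matrix.mul_assoc]
        _ = A.mulVec (M.mulVec v) := by rw [hAtA]
    have h2 : p2 v M = p2 v' M' := by
      rw [p2_eq_norm hMskew, p2_eq_norm hM'skew, hMv, normInv3 hA' (M.mulVec v)]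
    have hq : qM M' = qM M := by
      rw [← hM]; exact qM_inv hA hMskew
    refine ⟨h1, h2, ?_⟩
    rw [p3_sq, p3_sq, h1, h2, hq]
  · rintro ⟨h1, h2, h3⟩
    obtain ⟨A, hA, hAv, hAM⟩ := canon v M hMskew hp2
    obtain ⟨A', hA', hAv', hAM'⟩ := canon v' M' hM'skew hp2'
    have hp1pos : 0 < p1 v := by
      rcases lt_or_ge 0 (p1 v) with h | h
      · exact h
      · exfalso
        simp only [p1] at h
        have h0 : v 0 = 0 := by nlinarith [sq_nonneg (v 0), sq_nonneg (v 1), sq_nonneg (v 2)]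
        have hb : v 1 = 0 := by nlinarith [sq_nonneg (v 0), sq_nonneg (v 1), sq_nonneg (v 2)]
        have hc : v 2 = 0 := by nlinarith [sq_nonneg (v 0), sq_nonneg (v 1), sq_nonneg (v 2)]
        exact hp2 (by simp [p2, h0, hb, hc])
    have hs0 : Real.sqrt (p1 v) ≠ 0 := by positivity
    have hcases : p3 v' M' = p3 v M ∨ p3 v' M' = -(p3 v M) := by
      have : (p3 v M - p3 v' M') * (p3 v M + p3 v' M') = 0 := by linear_combination h3
      rcases mul_eq_zero.mp this with h | h
      · left; linarith
      · right; linarith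
    rcases hcases with hc | hc
    · apply trans_canon hA hA'
      · rw [hAv, hAv', h1]
      · rw [hAM, hAM', h1, h2, hc]
    · -- use the reflection R = diag(1, -1, 1)
      set R : Matrix (Fin 3) (Fin 3) ℝ := !![1, 0, 0; 0, -1, 0; 0, 0, 1] with hR
      have hRR : R * Rᵀ = 1 := by
        ext i j
        fin_cases i <;> fin_cases j <;>
          simp [hR, Matrix.mul_apply, Fin.sum_univ_three, Matrix.one_apply,
            Matrix.transpose, Matrix.vecHead, Matrix.vecTail]
      have hRA : (R * A) * (R * A)ᵀ = 1 := by
        have : R * (A * Aᵀ) * Rᵀ = 1 := by rw [hA, Matrix.mul_one, hRR]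
        rw [Matrix.transpose_mul, ← this]
        simp [Matrix.mul_assoc]
      apply trans_canon hRA hA'
      · rw [← Matrix.mulVec_mulVec, hAv, hAv', h1]
        funext i
        fin_cases i <;>
          simp [hR, Matrix.mulVec, dotProduct, Fin.sum_univ_three]
      · have e1 : R * A * M * (R * A)ᵀ = R * (A * M * Aᵀ) * Rᵀ := by
          simp [Matrix.transpose_mul, Matrix.mul_assoc]
        rw [e1, hAM, hAM', h1, h2, hc]
        ext i j
        fin_cases i <;> fin_cases j <;>
          simp [hR, Matrix.mul_apply, Fin.sum_univ_three,
            Matrix.transpose, Matrix.vecHead, Matrix.vecTail, neg_div]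
end
end

section
/- Let (v, c) ∈ ℝ² × ℝ with v = (c₁, c₂) ≠ (0,0) and c ≠ 0. Then the matrix ρ₂ := (1/√(c₁² + c₂²)) · [[sgn(c)·c₂, −sgn(c)·c₁], [c₁, c₂]] satisfies: (i) ρ₂ ∈ O_2(ℝ); (ii) ρ₂ v = (0, √(c₁² + c₂²))ᵀ; and (iii) det(ρ₂)·c = |c|; equivalently, identifying c with the skew-symmetric matrix M = [[0, c], [−c, 0]], one has ρ₂ M ρ₂ᵀ = [[0, |c|], [−|c|, 0]]. (The explicit moving frame for planar curves maps any generic point of ℝ² ⊕ so(2,ℝ) to the cross-section {c₁ = 0, c₂ > 0, c₁₂ > 0}.) -/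
open Matrix

/-- the explicit moving frame for planar curves. For generic
`(v, c) ∈ ℝ² × ℝ` (identifying `so(2,ℝ)` with `ℝ` via `c ↦ [[0, c], [−c, 0]]`),
the matrix `ρ₂` is orthogonal, rotates `v` onto the positive `y`-axis, and
`det(ρ₂)·c = |c|`; equivalently `ρ₂ M ρ₂ᵀ = [[0, |c|], [−|c|, 0]]`. -/
theorem stmt5 (v : Fin 2 → ℝ) (c : ℝ) (hv : v ≠ 0) (hc : c ≠ 0)
    (ρ : Matrix (Fin 2) (Fin 2) ℝ)
    (hρ : ρ = (1 / Real.sqrt (v 0 ^ 2 + v 1 ^ 2)) •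
      !![Real.sign c * v 1, -(Real.sign c * v 0); v 0, v 1]) :
    ρ * ρᵀ = 1 ∧
    ρ.mulVec v = ![0, Real.sqrt (v 0 ^ 2 + v 1 ^ 2)] ∧
    ρ.det * c = |c| ∧
    ρ * !![0, c; -c, 0] * ρᵀ = !![0, |c|; -|c|, 0] := by
  subst hρ
  have h0 : v 0 ≠ 0 ∨ v 1 ≠ 0 := by
    by_contra h; push_neg at h; apply hv; funext i; fin_cases i <;> simp [h.1, h.2]
  have hq : 0 < v 0 ^ 2 + v 1 ^ 2 := by
    rcases h0 with h | h <;> positivity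
  set s := Real.sqrt (v 0 ^ 2 + v 1 ^ 2) with hs
  have hs0 : 0 < s := Real.sqrt_pos.mpr hq
  have hs2 : s ^ 2 = v 0 ^ 2 + v 1 ^ 2 := Real.sq_sqrt hq.le
  set t := Real.sign c with htdef
  have hsc : t * c = |c| := by
    rcases lt_or_gt_of_ne hc with h | h
    · rw [htdef, Real.sign_of_neg h, abs_of_neg h]; ring
    · rw [htdef, Real.sign_of_pos h, abs_of_pos h]; ring
  have ht2 : t * t = 1 := by
    rcases lt_or_gt_of_ne hc with h | h
    · rw [htdef, Real.sign_of_neg h]; ring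
    · rw [htdef, Real.sign_of_pos h]; ring
  have hsne : s ≠ 0 := ne_of_gt hs0
  have hTr : (!![t * v 1, -(t * v 0); v 0, v 1])ᵀ
      = !![t * v 1, v 0; -(t * v 0), v 1] := by
    ext i j; fin_cases i <;> fin_cases j <;> simp
  refine ⟨?_, ?_, ?_, ?_⟩
  · rw [Matrix.transpose_smul, Matrix.smul_mul, Matrix.mul_smul, hTr, Matrix.mul_fin_two]
    ext i j
    fin_cases i <;> fin_cases j <;>
      simp [Matrix.one_apply] <;>
      (first
        | (right; ring)
        | (field_simp; first
            | linear_combination (v 0 ^ 2 + v 1 ^ 2) * ht2 - hs2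
            | linear_combination (-hs2)
            | linear_combination (-(t * c)) * hs2 + s ^ 2 * hsc
            | linear_combination (t * c) * hs2 - s ^ 2 * hsc
            | linear_combination t * hs2))
  · funext i
    fin_cases i <;>
      simp [Matrix.mulVec, dotProduct, Fin.sum_univ_two] <;>
      field_simp <;> nlinarith [hs2, ht2]
  · rw [Matrix.det_smul, Matrix.det_fin_two_of]
    have key : (1 / s) ^ 2 * (t * v 1 * v 1 - -(t * v 0) * v 0) = t := by
      field_simp; linear_combination (-t) * hs2
    simp only [Fintype.card_fin, smul_eq_mul, key]
    exact hsc
  · rw [Matrix.transpose_smul, Matrix.smul_mul, Matrix.smul_mul, Matrix.mul_smul, hTr,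
      Matrix.mul_fin_two, Matrix.mul_fin_two]
    ext i j
    fin_cases i <;> fin_cases j <;>
      simp <;>
      (first
        | (right; ring)
        | (field_simp; first
            | linear_combination (v 0 ^ 2 + v 1 ^ 2) * ht2 - hs2
            | linear_combination (-hs2)
            | linear_combination (-(t * c)) * hs2 + s ^ 2 * hsc
            | linear_combination (t * c) * hs2 - s ^ 2 * hsc
            | linear_combination t * hs2))
end

section
/- Let (v, c), (v', c') ∈ ℝ² × ℝ with v ≠ (0,0), v' ≠ (0,0), c ≠ 0 and c' ≠ 0. Then there exists A ∈ O_2(ℝ) with A v = v' and det(A)·c = c' if and only if ‖v‖² = ‖v'‖² and c² = (c')². (Two generic points of ℝ² ⊕ so(2,ℝ) are related by an orthogonal transformation if and only if the invariants c₁² + c₂² and c₁₂² agree.) -/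
open Matrix

set_option maxHeartbeats 1000000 in
/-- two generic points of `ℝ² ⊕ so(2,ℝ)` (identifying `so(2,ℝ)` with `ℝ`,
so that `O_2(ℝ)` acts by `A·(v, c) = (A v, det(A)·c)`) are related by an orthogonal
transformation if and only if the invariants `c₁² + c₂²` and `c₁₂²` agree. -/
theorem stmt6 (v v' : Fin 2 → ℝ) (c c' : ℝ)
    (hv : v ≠ 0) (hv' : v' ≠ 0) (hc : c ≠ 0) (hc' : c' ≠ 0) :
    (∃ A : Matrix (Fin 2) (Fin 2) ℝ,
        A * Aᵀ = 1 ∧ A.mulVec v = v' ∧ A.det * c = c') ↔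
      (v 0 ^ 2 + v 1 ^ 2 = v' 0 ^ 2 + v' 1 ^ 2 ∧ c ^ 2 = c' ^ 2) := by
  have hvor : v 0 ≠ 0 ∨ v 1 ≠ 0 := by
    by_contra h
    push_neg at h
    apply hv
    funext i; fin_cases i <;> simp [h.1, h.2]
  have hn : v 0 ^ 2 + v 1 ^ 2 > 0 := by
    rcases hvor with h | h <;> positivity
  have hn0 : v 0 ^ 2 + v 1 ^ 2 ≠ 0 := ne_of_gt hn
  constructor
  · rintro ⟨A, hA, hAv, hAc⟩
    have hA' : Aᵀ * A = 1 := mul_eq_one_comm.mp hA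
    have e1 : A 0 0 ^ 2 + A 1 0 ^ 2 = 1 := by
      have := congrFun (congrFun hA' 0) 0
      simp [Matrix.mul_apply, Fin.sum_univ_two, Matrix.one_apply] at this
      nlinarith [this]
    have e2 : A 0 1 ^ 2 + A 1 1 ^ 2 = 1 := by
      have := congrFun (congrFun hA' 1) 1
      simp [Matrix.mul_apply, Fin.sum_univ_two, Matrix.one_apply] at this
      nlinarith [this]
    have e3 : A 0 0 * A 0 1 + A 1 0 * A 1 1 = 0 := by
      have := congrFun (congrFun hA' 0) 1
      simp [Matrix.mul_apply, Fin.sum_univ_two, Matrix.one_apply] at this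
      nlinarith [this]
    have hv0 : v' 0 = A 0 0 * v 0 + A 0 1 * v 1 := by
      have := congrFun hAv 0
      simp [Matrix.mulVec, dotProduct, Fin.sum_univ_two] at this
      linarith [this]
    have hv1 : v' 1 = A 1 0 * v 0 + A 1 1 * v 1 := by
      have := congrFun hAv 1
      simp [Matrix.mulVec, dotProduct, Fin.sum_univ_two] at this
      linarith [this]
    have hdet : A.det * A.det = 1 := by
      have := congrArg Matrix.det hA
      rwa [Matrix.det_mul, Matrix.det_transpose, Matrix.det_one] at this
    constructor
    · rw [hv0, hv1]
      linear_combination (-v 0 ^ 2) * e1 + (-v 1 ^ 2) * e2 + (-2 * v 0 * v 1) * e3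
    · rw [← hAc]
      linear_combination (-c ^ 2) * hdet
  · rintro ⟨hnorm, hsq⟩
    have hcc : c' = c ∨ c' = -c := by
      have : (c' - c) * (c' + c) = 0 := by nlinarith
      rcases mul_eq_zero.mp this with h | h
      · left; linarith
      · right; linarith
    rcases hcc with h | h
    · -- rotation
      obtain ⟨a, b, hab, hva, hvb⟩ :
          ∃ a b : ℝ, a ^ 2 + b ^ 2 = 1 ∧ a * v 0 - b * v 1 = v' 0 ∧
            b * v 0 + a * v 1 = v' 1 := by
        refine ⟨(v 0 * v' 0 + v 1 * v' 1) / (v 0 ^ 2 + v 1 ^ 2),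
                (v 0 * v' 1 - v 1 * v' 0) / (v 0 ^ 2 + v 1 ^ 2), ?_, ?_, ?_⟩
        · field_simp
          linear_combination (-(v 0 ^ 2 + v 1 ^ 2)) * hnorm
        · field_simp; ring
        · field_simp; ring
      refine ⟨!![a, -b; b, a], ?_, ?_, ?_⟩
      · have ht : (!![a, -b; b, a] : Matrix (Fin 2) (Fin 2) ℝ)ᵀ = !![a, b; -b, a] := by
          ext i j; fin_cases i <;> fin_cases j <;> rfl
        rw [ht, Matrix.mul_fin_two, Matrix.one_fin_two]
        ext i j
        fin_cases i <;> fin_cases j <;> simp <;> nlinarith [hab]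
      · funext i
        fin_cases i <;>
          simp [Matrix.mulVec, dotProduct, Fin.sum_univ_two] <;>
          linarith [hva, hvb]
      · have hd : (!![a, -b; b, a] : Matrix (Fin 2) (Fin 2) ℝ).det = 1 := by
          rw [Matrix.det_fin_two_of]
          linear_combination hab
        rw [hd, h, one_mul]
    · -- reflection
      obtain ⟨a, b, hab, hva, hvb⟩ :
          ∃ a b : ℝ, a ^ 2 + b ^ 2 = 1 ∧ a * v 0 + b * v 1 = v' 0 ∧
            b * v 0 - a * v 1 = v' 1 := by
        refine ⟨(v 0 * v' 0 - v 1 * v' 1) / (v 0 ^ 2 + v 1 ^ 2),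
                (v 0 * v' 1 + v 1 * v' 0) / (v 0 ^ 2 + v 1 ^ 2), ?_, ?_, ?_⟩
        · field_simp
          linear_combination (-(v 0 ^ 2 + v 1 ^ 2)) * hnorm
        · field_simp; ring
        · field_simp; ring
      refine ⟨!![a, b; b, -a], ?_, ?_, ?_⟩
      · have ht : (!![a, b; b, -a] : Matrix (Fin 2) (Fin 2) ℝ)ᵀ = !![a, b; b, -a] := by
          ext i j; fin_cases i <;> fin_cases j <;> rfl
        rw [ht, Matrix.mul_fin_two, Matrix.one_fin_two]
        ext i j
        fin_cases i <;> fin_cases j <;> simp <;> nlinarith [hab]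
      · funext i
        fin_cases i <;>
          simp [Matrix.mulVec, dotProduct, Fin.sum_univ_two] <;>
          linarith [hva, hvb]
      · have hd : (!![a, b; b, -a] : Matrix (Fin 2) (Fin 2) ℝ).det = -1 := by
          rw [Matrix.det_fin_two_of]
          linear_combination -hab
        rw [hd, h]; ring
end

section
/- Let d ≥ 3 and 1 ≤ i ≤ d−2. Let (v,M) ∈ ℂ^d ⊕ so(d,ℂ) belong to L_d^{(i)}, and suppose that Σ_{j=1}^{d−i} (M_{j, d−i+1})² ≠ 0. Then there exists B ∈ O_{d−i}(ℂ) such that, letting A ∈ O_d(ℂ) be the block-diagonal matrix with top-left (d−i)×(d−i) block B and bottom-right i×i block the identity, the pair (A v, A M Aᵀ) lies in L_d^{(i+1)} and moreover (A M Aᵀ)_{d−i, d−i+1} ≠ 0. (Inductive step in constructing the relative section: each generic point can be moved one step further down the chain of linear subspaces while preserving membership in the current one.) -/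
open Matrix

/-- Membership of `(v, M)` in the linear subspace `L_d^{(i)}` (without the skew-symmetry
condition, which is stated separately): `v_j = 0` for all `j` except the last coordinate,
and `M_{j,k} = 0` whenever `d − i + 2 ≤ k ≤ d` and `1 ≤ j ≤ k − 2` (1-based), i.e. in
0-based indices `d − i + 1 ≤ k` and `j + 1 < k`. -/
def memL (d i : ℕ) (v : Fin d → ℂ) (M : Matrix (Fin d) (Fin d) ℂ) : Prop :=
  (∀ j : Fin d, (j : ℕ) + 1 < d → v j = 0) ∧
  (∀ j k : Fin d, d - i + 1 ≤ (k : ℕ) → (j : ℕ) + 1 < (k : ℕ) → M j k = 0)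

/-- inductive step in constructing the relative section. If
`(v, M) ∈ L_d^{(i)}` is generic (the sum `Σ_{j=1}^{d−i} (M_{j, d−i+1})² ≠ 0`), then an
orthogonal block matrix `A = diag(B, 1)` with `B ∈ O_{d−i}(ℂ)` moves `(v, M)` into
`L_d^{(i+1)}` with `(A M Aᵀ)_{d−i, d−i+1} ≠ 0`. Here the block structure of `A` is
expressed by requiring all entries in the last `i` rows and columns to agree with the
identity matrix. (0-based indices.) -/
theorem stmt8 {d : ℕ} (hd : 3 ≤ d) (i : ℕ) (hi1 : 1 ≤ i) (hi2 : i ≤ d - 2)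
    (v : Fin d → ℂ) (M : Matrix (Fin d) (Fin d) ℂ) (hMskew : Mᵀ = -M)
    (hL : memL d i v M)
    (hsum : ∑ j : Fin d, (if (j : ℕ) < d - i then (M j ⟨d - i, by omega⟩) ^ 2 else 0) ≠ 0) :
    ∃ A : Matrix (Fin d) (Fin d) ℂ,
      A * Aᵀ = 1 ∧
      (∀ j k : Fin d, (d - i ≤ (j : ℕ) ∨ d - i ≤ (k : ℕ)) →
        A j k = if j = k then 1 else 0) ∧
      memL d (i + 1) (A.mulVec v) (A * M * Aᵀ) ∧
      (A * M * Aᵀ) ⟨d - i - 1, by omega⟩ ⟨d - i, by omega⟩ ≠ 0 := by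

  have hid : 2 ≤ d - i := by omega
  have hd1 : d - i < d := by omega
  have hd2 : d - i - 1 < d := by omega
  set col : Fin d := ⟨d - i, hd1⟩ with hcol
  set e : Fin d := ⟨d - i - 1, hd2⟩ with he
  set w : Fin d → ℂ := fun l => if (l : ℕ) < d - i then M l col else 0 with hw
  have hS : (∑ l, w l * w l) ≠ 0 := by
    have hEq : ∑ l : Fin d, w l * w l
        = ∑ j : Fin d, (if (j : ℕ) < d - i then M j col ^ 2 else 0) := by
      refine Finset.sum_congr rfl fun l _ => ?_
      simp only [hw]
      split <;> ring
    rw [hEq]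
    exact hsum
  obtain ⟨c₀, hc₀⟩ : ∃ z : ℂ, z * z = ∑ l, w l * w l := by
    obtain ⟨z, hz⟩ := IsAlgClosed.exists_pow_nat_eq (∑ l, w l * w l) (n := 2) zero_lt_two
    exact ⟨z, by rw [← hz]; ring⟩
  set c : ℂ := if c₀ = w e then -c₀ else c₀ with hcdef
  have hc : c * c = ∑ l, w l * w l := by
    rw [hcdef]; split
    · rw [neg_mul_neg]; exact hc₀
    · exact hc₀
  have hc0 : c ≠ 0 := fun h => hS (by rw [← hc, h, mul_zero])
  have hcne : c ≠ w e := by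
    rw [hcdef]; split
    · rename_i h; rw [← h]; intro h2
      apply hS
      rw [← hc₀]
      have hz : c₀ = 0 := by linear_combination (-1/2 : ℂ) * h2
      rw [hz, mul_zero]
    · assumption
  set u : Fin d → ℂ := fun l => w l - if l = e then c else 0 with hu
  have hu0 : ∀ l : Fin d, d - i ≤ (l : ℕ) → u l = 0 := by
    intro l hl
    have h1 : ¬ ((l : ℕ) < d - i) := by omega
    have h2 : l ≠ e := by
      intro h
      rw [h] at hl
      simp only [he] at hl
      omega
    simp [hu, hw, h1, h2]
  have hsum_ite : ∀ f : Fin d → ℂ, ∑ l, (if l = e then f l else 0) = f e := by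
    intro f; simp
  set t : ℂ := ∑ l, u l * u l with htdef
  have ht : t = 2 * c * (c - w e) := by
    have step : ∀ l : Fin d, u l * u l =
        w l * w l - (if l = e then 2 * c * w l - c * c else 0) := by
      intro l; simp only [hu]; split <;> ring
    rw [htdef, Finset.sum_congr rfl fun l _ => step l, Finset.sum_sub_distrib, hsum_ite]
    linear_combination -hc
  have ht0 : t ≠ 0 := by
    rw [ht]
    exact mul_ne_zero (mul_ne_zero two_ne_zero hc0) (sub_ne_zero.mpr (Ne.symm (fun h => hcne h.symm)))
  have huM : ∑ l, u l * M l col = t / 2 := by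
    have h1 : ∀ l : Fin d, u l * M l col = u l * w l := by
      intro l
      by_cases hl : (l : ℕ) < d - i
      · simp [hw, hl]
      · rw [hu0 l (by omega), zero_mul, zero_mul]
    have h2 : ∀ l : Fin d, u l * w l = w l * w l - (if l = e then c * w l else 0) := by
      intro l; simp only [hu]; split <;> ring
    rw [Finset.sum_congr rfl fun l _ => h1 l, Finset.sum_congr rfl fun l _ => h2 l,
      Finset.sum_sub_distrib, hsum_ite, ht]
    linear_combination -hc
  set A : Matrix (Fin d) (Fin d) ℂ :=
    Matrix.of fun j k => (if j = k then 1 else 0) - 2 / t * (u j * u k) with hA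
  have hAapp : ∀ j k : Fin d, A j k = (if j = k then 1 else 0) - 2 / t * (u j * u k) :=
    fun j k => rfl
  have hAid : ∀ j k : Fin d, (d - i ≤ (j : ℕ) ∨ d - i ≤ (k : ℕ)) →
      A j k = if j = k then 1 else 0 := by
    intro j k hjk
    rw [hAapp]
    rcases hjk with h | h
    · rw [hu0 j h, zero_mul, mul_zero, sub_zero]
    · rw [hu0 k h, mul_zero, mul_zero, sub_zero]
  have hAorth : A * Aᵀ = 1 := by
    ext j k
    rw [Matrix.mul_apply, Matrix.one_apply]
    have step : ∀ l : Fin d, A j l * Aᵀ l k =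
        (if j = l then (if k = l then (1 : ℂ) else 0) else 0)
        - 2 / t * u j * (if k = l then u l else 0)
        - 2 / t * u k * (if j = l then u l else 0)
        + (2 / t * u j) * (2 / t * u k) * (u l * u l) := by
      intro l
      rw [Matrix.transpose_apply, hAapp, hAapp]
      by_cases h1 : j = l <;> by_cases h2 : k = l <;> simp only [h1, h2, if_pos, if_neg,
        if_true, if_false] <;> ring
    rw [Finset.sum_congr rfl fun l _ => step l, Finset.sum_add_distrib,
      Finset.sum_sub_distrib, Finset.sum_sub_distrib, ← Finset.mul_sum, ← Finset.mul_sum,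
      ← Finset.mul_sum, ← htdef]
    simp only [Finset.sum_ite_eq, Finset.mem_univ, if_true]
    by_cases h : j = k
    · subst h; simp only [if_pos rfl]; field_simp; ring
    · rw [if_neg h, if_neg (fun h2 => h h2.symm)]; field_simp; ring
  have hAM : ∀ j k : Fin d, (A * M) j k = M j k - 2 / t * u j * ∑ l, u l * M l k := by
    intro j k
    rw [Matrix.mul_apply]
    have step : ∀ l : Fin d, A j l * M l k =
        (if j = l then M l k else 0) - 2 / t * u j * (u l * M l k) := by
      intro l
      rw [hAapp]
      by_cases h1 : j = l <;> simp only [h1, if_true, if_false, if_pos, if_neg] <;> ring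
    rw [Finset.sum_congr rfl fun l _ => step l, Finset.sum_sub_distrib, ← Finset.mul_sum]
    simp only [Finset.sum_ite_eq, Finset.mem_univ, if_true]
  have hAMcol : ∀ j : Fin d, (j : ℕ) < d - i → (A * M) j col = if j = e then c else 0 := by
    intro j hj
    rw [hAM, huM]
    have hMj : M j col = w j := by simp [hw, hj]
    have ht2 : 2 / t * u j * (t / 2) = u j := by field_simp
    rw [hMj, ht2]
    simp only [hu]
    ring
  have hsumhigh : ∀ k : Fin d, d - i < (k : ℕ) → ∑ l, u l * M l k = 0 := by
    intro k hk
    refine Finset.sum_eq_zero fun l _ => ?_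
    by_cases hl : (l : ℕ) < d - i
    · rw [hL.2 l k (by omega) (by omega), mul_zero]
    · rw [hu0 l (by omega), zero_mul]
  have hAMhigh : ∀ j k : Fin d, d - i < (k : ℕ) → (j : ℕ) + 1 < (k : ℕ) → (A * M) j k = 0 := by
    intro j k hk hjk
    rw [hAM, hsumhigh k hk, hL.2 j k (by omega) hjk, mul_zero, sub_zero]
  have hAMA : ∀ j k : Fin d, d - i ≤ (k : ℕ) → (A * M * Aᵀ) j k = (A * M) j k := by
    intro j k hk
    rw [Matrix.mul_apply, Finset.sum_eq_single k]
    · rw [Matrix.transpose_apply, hAid k k (Or.inl hk), if_pos rfl, mul_one]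
    · intro m _ hm
      rw [Matrix.transpose_apply, hAid k m (Or.inl hk), if_neg (fun h => hm h.symm), mul_zero]
    · intro h; exact absurd (Finset.mem_univ k) h
  refine ⟨A, hAorth, hAid, ⟨?_, ?_⟩, ?_⟩
  · intro j hj
    simp only [Matrix.mulVec, dotProduct]
    refine Finset.sum_eq_zero fun l _ => ?_
    by_cases hl : (l : ℕ) + 1 < d
    · rw [hL.1 l hl, mul_zero]
    · have hAjl : A j l = 0 := by
        rw [hAid j l (Or.inr (by omega))]
        rw [if_neg]
        intro h
        rw [h] at hj
        omega
      rw [hAjl, zero_mul]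
  · intro j k hk hjk
    have hk' : d - i ≤ (k : ℕ) := by omega
    rw [hAMA j k hk']
    rcases Nat.lt_or_ge (d - i) (k : ℕ) with h | h
    · exact hAMhigh j k h hjk
    · have hkdi : (k : ℕ) = d - i := by omega
      have hkc : k = col := by
        apply Fin.ext
        rw [hkdi]
      have hjne : (j : ℕ) ≠ d - i - 1 := by omega
      rw [hkc, hAMcol j (by omega), if_neg]
      intro hje
      apply hjne
      rw [hje]
  · have hcv : d - i ≤ (col : ℕ) := le_of_eq rfl
    rw [hAMA e col hcv, hAMcol e (by simp only [he]; omega), if_pos rfl]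
    exact hc0
end

section
/- Let d ≥ 2 and let M ∈ so(d,ℂ) be tridiagonal, i.e. M_{j,j+1} = c_j for 1 ≤ j ≤ d−1 (so M_{j+1,j} = −c_j) and M_{j,k} = 0 for k > j+1. Then for every 1 ≤ k < d: (a) (M^k)_{d−k, d} = Π_{i=1}^{k} c_{d−i}; (b) (M^k)_{j, d} = 0 for all 1 ≤ j < d−k; and (c) for each j > d−k, the entry (M^k)_{j, d} depends only on the values c_{d−1}, c_{d−2}, …, c_{d−k+1}: if M' is another such tridiagonal skew-symmetric matrix with M'_{d−l, d−l+1} = M_{d−l, d−l+1} for all 1 ≤ l ≤ k−1, then (M'^k)_{j,d} = (M^k)_{j,d} for all j > d−k. -/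
open Matrix Finset

def ent (d : ℕ) (M : Matrix (Fin d) (Fin d) ℂ) (j m : ℕ) : ℂ :=
  if h : j < d ∧ m < d then M ⟨j, h.1⟩ ⟨m, h.2⟩ else 0

def colN (d : ℕ) (M : Matrix (Fin d) (Fin d) ℂ) (k j : ℕ) : ℂ :=
  if h : j < d then (M ^ k) ⟨j, h⟩ ⟨d - 1, by omega⟩ else 0

variable {d : ℕ}

lemma Mzero (M : Matrix (Fin d) (Fin d) ℂ) (hskew : Mᵀ = -M)
    (htri : ∀ j k : Fin d, (j : ℕ) + 1 < (k : ℕ) → M j k = 0)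
    (p q : Fin d) (h1 : (p : ℕ) ≠ (q : ℕ) + 1) (h2 : (q : ℕ) ≠ (p : ℕ) + 1) :
    M p q = 0 := by
  rcases lt_trichotomy (p : ℕ) (q : ℕ) with h | h | h
  · exact htri p q (by omega)
  · have hpq : p = q := Fin.ext h
    subst hpq
    have hh : M p p = -M p p := by
      have := congrFun (congrFun hskew p) p
      simpa [Matrix.transpose_apply] using this
    have h2 : (2 : ℂ) * M p p = 0 := by linear_combination hh
    simpa [two_ne_zero] using h2
  · have hq : M q p = 0 := htri q p (by omega)
    have := congrFun (congrFun hskew q) p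
    simp only [Matrix.transpose_apply, Matrix.neg_apply] at this
    rw [this, hq, neg_zero]

lemma ent_skew (M : Matrix (Fin d) (Fin d) ℂ) (hskew : Mᵀ = -M) (p q : ℕ) :
    ent d M p q = - ent d M q p := by
  by_cases h : p < d ∧ q < d
  · rw [ent, dif_pos h, ent, dif_pos ⟨h.2, h.1⟩]
    have := congrFun (congrFun hskew ⟨q, h.2⟩) ⟨p, h.1⟩
    simpa [Matrix.transpose_apply] using this
  · rw [ent, dif_neg h, ent, dif_neg (fun hc => h ⟨hc.2, hc.1⟩), neg_zero]

lemma col_rec (M : Matrix (Fin d) (Fin d) ℂ) (hskew : Mᵀ = -M)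
    (htri : ∀ j k : Fin d, (j : ℕ) + 1 < (k : ℕ) → M j k = 0) (k j : ℕ) :
    colN d M (k + 1) j =
      ent d M j (j - 1) * colN d M k (j - 1) + ent d M j (j + 1) * colN d M k (j + 1) := by
  by_cases hj : j < d
  · have hd1 : d - 1 < d := by omega
    have hlhs : colN d M (k + 1) j = ∑ m : Fin d, M ⟨j, hj⟩ m * (M ^ k) m ⟨d - 1, hd1⟩ := by
      rw [colN, dif_pos hj, pow_succ', Matrix.mul_apply]
    set f : Fin d → ℂ := fun m => M ⟨j, hj⟩ m * (M ^ k) m ⟨d - 1, hd1⟩ with hf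
    have hjm1 : j - 1 < d := by omega
    have hcoljm1 : colN d M k (j - 1) = (M ^ k) ⟨j - 1, hjm1⟩ ⟨d - 1, hd1⟩ := by
      rw [colN, dif_pos hjm1]
    have hentjm1 : ent d M j (j - 1) = M ⟨j, hj⟩ ⟨j - 1, hjm1⟩ := by
      rw [ent, dif_pos ⟨hj, hjm1⟩]
    by_cases hj1 : j + 1 < d
    · have hcoljp1 : colN d M k (j + 1) = (M ^ k) ⟨j + 1, hj1⟩ ⟨d - 1, hd1⟩ := by
        rw [colN, dif_pos hj1]
      have hentjp1 : ent d M j (j + 1) = M ⟨j, hj⟩ ⟨j + 1, hj1⟩ := by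
        rw [ent, dif_pos ⟨hj, hj1⟩]
      have hne : (⟨j - 1, hjm1⟩ : Fin d) ≠ ⟨j + 1, hj1⟩ := by
        simp only [ne_eq, Fin.mk.injEq]; omega
      have hmem : (⟨j - 1, hjm1⟩ : Fin d) ∈ univ.erase (⟨j + 1, hj1⟩ : Fin d) :=
        Finset.mem_erase.mpr ⟨hne, mem_univ _⟩
      have hsum : ∑ m : Fin d, f m
          = (∑ m ∈ univ.erase (⟨j + 1, hj1⟩ : Fin d), f m) + f ⟨j + 1, hj1⟩ :=
        (Finset.sum_erase_add _ _ (mem_univ _)).symm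
      have hsum2 : ∑ m ∈ univ.erase (⟨j + 1, hj1⟩ : Fin d), f m = f ⟨j - 1, hjm1⟩ := by
        apply Finset.sum_eq_single_of_mem _ hmem
        intro m hm hmne
        have hm2 : m ≠ (⟨j + 1, hj1⟩ : Fin d) := (Finset.mem_erase.mp hm).1
        have hm2' : (m : ℕ) ≠ j + 1 := fun hc => hm2 (Fin.ext hc)
        have hmne' : (m : ℕ) ≠ j - 1 := fun hc => hmne (Fin.ext hc)
        have hz : M ⟨j, hj⟩ m = 0 := by
          apply Mzero M hskew htri
          · show j ≠ (m : ℕ) + 1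
            omega
          · exact hm2'
        simp [hf, hz]
      rw [hlhs, hsum, hsum2, hcoljm1, hcoljp1, hentjm1, hentjp1]
    · have hentjp1 : ent d M j (j + 1) = 0 := by
        rw [ent, dif_neg]; omega
      have hsum : ∑ m : Fin d, f m = f ⟨j - 1, hjm1⟩ := by
        apply Finset.sum_eq_single_of_mem _ (mem_univ _)
        intro m _ hmne
        have hmne' : (m : ℕ) ≠ j - 1 := fun hc => hmne (Fin.ext hc)
        have hmlt := m.isLt
        have hz : M ⟨j, hj⟩ m = 0 := by
          apply Mzero M hskew htri
          · show j ≠ (m : ℕ) + 1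
            omega
          · show (m : ℕ) ≠ j + 1
            omega
        simp [hf, hz]
      rw [hlhs, hsum, hentjm1, hcoljm1, hentjp1]
      ring
  · have h1 : ent d M j (j - 1) = 0 := by rw [ent, dif_neg]; omega
    have h2 : ent d M j (j + 1) = 0 := by rw [ent, dif_neg]; omega
    rw [colN, dif_neg hj, h1, h2]
    ring

lemma key (hd : 2 ≤ d) (k : ℕ) : k ≤ d - 1 → ∀ M : Matrix (Fin d) (Fin d) ℂ, Mᵀ = -M →
    (∀ j m : Fin d, (j : ℕ) + 1 < (m : ℕ) → M j m = 0) →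
    (colN d M k (d - 1 - k) = ∏ i ∈ Finset.range k, ent d M (d - (i + 1) - 1) (d - (i + 1))) ∧
    (∀ j, j < d - 1 - k → colN d M k j = 0) ∧
    (∀ M' : Matrix (Fin d) (Fin d) ℂ, M'ᵀ = -M' →
      (∀ j m : Fin d, (j : ℕ) + 1 < (m : ℕ) → M' j m = 0) →
      (∀ l, 1 ≤ l → l ≤ k - 1 → ent d M' (d - l - 1) (d - l) = ent d M (d - l - 1) (d - l)) →
      ∀ j, d - k ≤ j → colN d M' k j = colN d M k j) := by
  induction k with
  | zero =>
    intro _ M hskew htri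
    refine ⟨?_, ?_, ?_⟩
    · rw [Finset.prod_range_zero, Nat.sub_zero, colN,
        dif_pos (show d - 1 < d by omega), pow_zero, Matrix.one_apply_eq]
    · intro j hj
      rw [Nat.sub_zero] at hj
      rw [colN, dif_pos (show j < d by omega), pow_zero, Matrix.one_apply_ne]
      simp only [ne_eq, Fin.mk.injEq]
      omega
    · intro M' _ _ _ j hj
      rw [Nat.sub_zero] at hj
      rw [colN, dif_neg (by omega), colN, dif_neg (by omega)]
  | succ k ih =>
    intro hk M hskew htri
    have hk' : k ≤ d - 1 := by omega
    obtain ⟨ihA, ihB, ihC⟩ := ih hk' M hskew htri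
    refine ⟨?_, ?_, ?_⟩
    · rw [col_rec M hskew htri, ihB (d - 1 - (k + 1) - 1) (by omega)]
      have e1 : d - 1 - (k + 1) + 1 = d - 1 - k := by omega
      rw [e1, ihA, Finset.prod_range_succ]
      have e2 : d - 1 - (k + 1) = d - (k + 1) - 1 := by omega
      have e3 : d - 1 - k = d - (k + 1) := by omega
      rw [e2, e3]
      ring
    · intro j hj
      rw [col_rec M hskew htri, ihB (j - 1) (by omega), ihB (j + 1) (by omega)]
      ring
    · intro M' hskew' htri' hagree j hjge
      obtain ⟨ihA', ihB', ihC'⟩ := ih hk' M' hskew' htri'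
      have hagree' : ∀ l, 1 ≤ l → l ≤ k - 1 →
          ent d M' (d - l - 1) (d - l) = ent d M (d - l - 1) (d - l) :=
        fun l h1 h2 => hagree l h1 (by omega)
      have hIH : ∀ m, d - k ≤ m → colN d M' k m = colN d M k m :=
        ihC M' hskew' htri' hagree'
      rw [col_rec M hskew htri, col_rec M' hskew' htri']
      by_cases hjd : j < d
      · have hj1 : 1 ≤ j := by omega
        have hent2 : ent d M' j (j + 1) = ent d M j (j + 1) := by
          by_cases h : j + 1 < d
          · have h1 := hagree (d - 1 - j) (by omega) (by omega)
            have e1 : d - (d - 1 - j) - 1 = j := by omega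
            have e2 : d - (d - 1 - j) = j + 1 := by omega
            rw [e1, e2] at h1; exact h1
          · rw [ent, dif_neg (by omega), ent, dif_neg (by omega)]
        have hcol2 : colN d M' k (j + 1) = colN d M k (j + 1) := hIH (j + 1) (by omega)
        by_cases hcase : j = d - (k + 1)
        · rw [ihB (j - 1) (by omega), ihB' (j - 1) (by omega), hent2, hcol2]
          ring
        · have hjge2 : d - k ≤ j := by omega
          have hent1 : ent d M' j (j - 1) = ent d M j (j - 1) := by
            have h1 := hagree (d - j) (by omega) (by omega)
            have e1 : d - (d - j) - 1 = j - 1 := by omega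
            have e2 : d - (d - j) = j := by omega
            rw [e1, e2] at h1
            rw [ent_skew M hskew, ent_skew M' hskew', h1]
          by_cases hcase2 : j = d - k
          · have e : j - 1 = d - 1 - k := by omega
            have hprod : colN d M' k (j - 1) = colN d M k (j - 1) := by
              rw [e, ihA, ihA']
              refine Finset.prod_congr rfl fun i hi => ?_
              have hik : i < k := Finset.mem_range.mp hi
              exact hagree (i + 1) (by omega) (by omega)
            rw [hent1, hent2, hcol2, hprod]
          · have hcol1 : colN d M' k (j - 1) = colN d M k (j - 1) := hIH (j - 1) (by omega)
            rw [hent1, hent2, hcol1, hcol2]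
      · have z1 : ent d M' j (j - 1) = 0 := by rw [ent, dif_neg]; omega
        have z2 : ent d M' j (j + 1) = 0 := by rw [ent, dif_neg]; omega
        have z3 : ent d M j (j - 1) = 0 := by rw [ent, dif_neg]; omega
        have z4 : ent d M j (j + 1) = 0 := by rw [ent, dif_neg]; omega
        rw [z1, z2, z3, z4]
        ring

/-- powers of a tridiagonal skew-symmetric matrix. With 1-based indices
as in the paper (`c_j = M_{j, j+1}`), for `1 ≤ k < d`:
(a) `(M^k)_{d−k, d} = Π_{i=1}^{k} c_{d−i}`;
(b) `(M^k)_{j, d} = 0` for `j < d − k`;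
(c) for `j > d − k`, the entry `(M^k)_{j, d}` depends only on `c_{d−1}, …, c_{d−k+1}`.
Below indices are 0-based, so the 1-based pair `(j, k)` becomes `(j−1, k−1)`. -/
theorem stmt14 {d : ℕ} (hd : 2 ≤ d)
    (M : Matrix (Fin d) (Fin d) ℂ) (hMskew : Mᵀ = -M)
    (hMtri : ∀ j k : Fin d, (j : ℕ) + 1 < (k : ℕ) → M j k = 0)
    (k : ℕ) (hk1 : 1 ≤ k) (hk2 : k < d) :
    ((M ^ k) ⟨d - 1 - k, by omega⟩ ⟨d - 1, by omega⟩ =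
      ∏ i ∈ Finset.range k, M ⟨d - (i + 1) - 1, by omega⟩ ⟨d - (i + 1), by omega⟩) ∧
    (∀ j : Fin d, (j : ℕ) < d - 1 - k → (M ^ k) j ⟨d - 1, by omega⟩ = 0) ∧
    (∀ M' : Matrix (Fin d) (Fin d) ℂ, M'ᵀ = -M' →
      (∀ j k' : Fin d, (j : ℕ) + 1 < (k' : ℕ) → M' j k' = 0) →
      (∀ (l : ℕ) (_hl1 : 1 ≤ l) (_hl2 : l ≤ k - 1),
        M' ⟨d - l - 1, by omega⟩ ⟨d - l, by omega⟩ =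
          M ⟨d - l - 1, by omega⟩ ⟨d - l, by omega⟩) →
      ∀ j : Fin d, d - k ≤ (j : ℕ) →
        (M' ^ k) j ⟨d - 1, by omega⟩ = (M ^ k) j ⟨d - 1, by omega⟩) := by
  obtain ⟨hA, hB, hC⟩ := key hd k (by omega) M hMskew hMtri
  refine ⟨?_, ?_, ?_⟩
  · rw [colN, dif_pos (show d - 1 - k < d by omega)] at hA
    refine hA.trans (Finset.prod_congr rfl fun i hi => ?_)
    have hik : i < k := Finset.mem_range.mp hi
    rw [ent, dif_pos ⟨(by omega : d - (i + 1) - 1 < d), (by omega : d - (i + 1) < d)⟩]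
  · intro j hj
    have := hB j hj
    rw [colN, dif_pos j.isLt] at this
    simpa [Fin.eta] using this
  · intro M' h1 h2 h3 j hj
    have h3' : ∀ l, 1 ≤ l → l ≤ k - 1 →
        ent d M' (d - l - 1) (d - l) = ent d M (d - l - 1) (d - l) := by
      intro l hl1 hl2
      rw [ent, dif_pos ⟨(by omega : d - l - 1 < d), (by omega : d - l < d)⟩,
        ent, dif_pos ⟨(by omega : d - l - 1 < d), (by omega : d - l < d)⟩]
      exact h3 l hl1 hl2
    have := hC M' h1 h2 h3' j hj
    rw [colN, dif_pos j.isLt, colN, dif_pos j.isLt] at this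
    simpa [Fin.eta] using this
end
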